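/- Let Y ≥ 1 be a selfadjoint operator on a Hilbert space H and X a selfadjoint operator whose unitary group e^{itX} leaves D(Y) invariant with ‖Y e^{itX} ψ‖ ≤ e^{k|t|} ‖Y ψ‖ for all ψ ∈ D(Y) and some k ≥ 0. If χ : ℝ → ℂ has Fourier transform χ̂ ∈ L¹(ℝ) supported in [−R, R], then the operator χ(X) = ∫_ℝ χ̂(s) e^{isX} ds leaves D(Y) invariant, and ‖Y χ(X) ψ‖ ≤ e^{kR} ‖χ̂‖_{L¹} ‖Y ψ‖ for all ψ ∈ D(Y). -/

import Mathlib

open MeasureTheory Filter Set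

section Helpers

lemma exists_weak_limit {W : Type*} [NormedAddCommGroup W] [InnerProductSpace ℂ W]
    [CompleteSpace W]
    (𝒰 : Ultrafilter ℕ) (v : ℕ → W) (C : ℝ) (hb : ∀ n, ‖v n‖ ≤ C) :
    ∃ w : W, ‖w‖ ≤ C ∧
      ∀ y : W, Tendsto (fun n => (inner ℂ (v n) y : ℂ)) 𝒰 (nhds (inner ℂ w y)) := by
  have hC : 0 ≤ C := le_trans (norm_nonneg _) (hb 0)
  have key : ∀ y : W, ∃ a : ℂ, Tendsto (fun n => (inner ℂ (v n) y : ℂ)) 𝒰 (nhds a) := by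
    intro y
    have hmem : Metric.closedBall (0:ℂ) (C * ‖y‖) ∈ 𝒰.map (fun n => (inner ℂ (v n) y : ℂ)) := by
      refine Filter.mem_map.2 ?_
      have : ∀ n, (inner ℂ (v n) y : ℂ) ∈ Metric.closedBall (0:ℂ) (C * ‖y‖) := by
        intro n
        simp only [Metric.mem_closedBall, dist_zero_right]
        calc ‖(inner ℂ (v n) y : ℂ)‖ ≤ ‖v n‖ * ‖y‖ := norm_inner_le_norm _ _
          _ ≤ C * ‖y‖ := by gcongr; exact hb n
      exact Filter.univ_mem' this
    obtain ⟨a, -, ha⟩ := (ProperSpace.isCompact_closedBall (0:ℂ) (C * ‖y‖)).ultrafilter_le_nhds'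
      (𝒰.map (fun n => (inner ℂ (v n) y : ℂ))) hmem
    exact ⟨a, ha⟩
  choose ℓ hℓ using key
  have hadd : ∀ y z, ℓ (y + z) = ℓ y + ℓ z := by
    intro y z
    refine tendsto_nhds_unique ?_ ((hℓ y).add (hℓ z))
    simpa [inner_add_right] using hℓ (y + z)
  have hsmul : ∀ (c : ℂ) y, ℓ (c • y) = c * ℓ y := by
    intro c y
    refine tendsto_nhds_unique ?_ ((hℓ y).const_mul c)
    simpa [inner_smul_right] using hℓ (c • y)
  have hbdd : ∀ y, ‖ℓ y‖ ≤ C * ‖y‖ := by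
    intro y
    refine le_of_tendsto ((hℓ y).norm) (Filter.Eventually.of_forall fun n => ?_)
    calc ‖(inner ℂ (v n) y : ℂ)‖ ≤ ‖v n‖ * ‖y‖ := norm_inner_le_norm _ _
      _ ≤ C * ‖y‖ := by gcongr; exact hb n
  let L : W →L[ℂ] ℂ := LinearMap.mkContinuous
    { toFun := ℓ, map_add' := hadd, map_smul' := hsmul } C hbdd
  refine ⟨(InnerProductSpace.toDual ℂ W).symm L, ?_, ?_⟩
  · rw [LinearIsometryEquiv.norm_map]
    exact LinearMap.mkContinuous_norm_le _ hC hbdd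
  · intro y
    have : (inner ℂ ((InnerProductSpace.toDual ℂ W).symm L) y : ℂ) = L y :=
      InnerProductSpace.toDual_symm_apply
    rw [this]
    exact hℓ y

lemma iUnion_Ico_partition (q : ℕ → ℝ) (hq : Monotone q) (n : ℕ) :
    ⋃ i ∈ Finset.range n, Set.Ico (q i) (q (i+1)) = Set.Ico (q 0) (q n) := by
  induction n with
  | zero => simp
  | succ n ih =>
    rw [Finset.range_add_one, Finset.set_biUnion_insert, ih, Set.union_comm,
      Set.Ico_union_Ico_eq_Ico (hq (Nat.zero_le n)) (hq (Nat.le_succ n))]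

end Helpers

set_option maxHeartbeats 2000000

/-- **Invariance of `D(Y)` under `χ(X)` with compactly supported Fourier transform**
(Proposition 5.3 of Fröhlich–Merkli).  Let `Y ≥ 1` be a selfadjoint (closed) operator and
`U t = e^{itX}` a unitary group leaving `D(Y)` invariant with
`‖Y U t ψ‖ ≤ e^{k|t|}‖Yψ‖`.  If `χ̂ ∈ L¹(ℝ)` is supported in `[−R, R]`, then
`χ(X)ψ = ∫ χ̂(s) U s ψ ds` leaves `D(Y)` invariant and
`‖Y χ(X) ψ‖ ≤ e^{kR} ‖χ̂‖_{L¹} ‖Yψ‖` for all `ψ ∈ D(Y)`. -/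
theorem chiX_leaves_domain_invariant
    {H : Type*} [NormedAddCommGroup H] [InnerProductSpace ℂ H] [CompleteSpace H]
    (Y : H →ₗ.[ℂ] H) (hYclosed : Y.IsClosed)
    (hY1 : ∀ ψ : Y.domain, ‖(ψ : H)‖ ^ 2 ≤ (inner (𝕜 := ℂ) (ψ : H) (Y ψ)).re)
    (U : ℝ → (H →L[ℂ] H))
    (hU0 : U 0 = 1) (hUgroup : ∀ s t, U (s + t) = (U s).comp (U t))
    (hUiso : ∀ t (ψ : H), ‖U t ψ‖ = ‖ψ‖)
    (hUcont : ∀ ψ : H, Continuous fun t => U t ψ)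
    (k : ℝ) (hk : 0 ≤ k)
    (hinv : ∀ (t : ℝ) (ψ : Y.domain), U t (ψ : H) ∈ Y.domain)
    (hbound : ∀ (t : ℝ) (ψ : Y.domain),
      ‖Y ⟨U t (ψ : H), hinv t ψ⟩‖ ≤ Real.exp (k * |t|) * ‖Y ψ‖)
    (χhat : ℝ → ℂ) (hχint : Integrable χhat)
    (R : ℝ) (hR : 0 ≤ R)
    (hsupp : ∀ s, χhat s ≠ 0 → s ∈ Set.Icc (-R) R) :
    ∀ ψ : Y.domain,
      ∃ hmem : (∫ s, χhat s • U s (ψ : H)) ∈ Y.domain,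
        ‖Y ⟨∫ s, χhat s • U s (ψ : H), hmem⟩‖ ≤
          Real.exp (k * R) * (∫ s, ‖χhat s‖) * ‖Y ψ‖ := by
  intro ψ
  set g : ℝ → H := fun s => U s (ψ : H) with hg
  set f : ℝ → H := fun s => χhat s • g s with hf
  set φ : H := ∫ s, f s with hφ
  set I : ℝ := ∫ s, ‖χhat s‖ with hI
  set C : ℝ := Real.exp (k * R) * I * ‖Y ψ‖ with hC
  have hI0 : 0 ≤ I := integral_nonneg fun s => norm_nonneg _
  have hC0 : 0 ≤ C := mul_nonneg (mul_nonneg (Real.exp_nonneg _) hI0) (norm_nonneg _)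
  have hgcont : Continuous g := hUcont ψ
  have hgnorm : ∀ s, ‖g s‖ = ‖(ψ : H)‖ := fun s => hUiso s _
  have hfmeas : AEStronglyMeasurable f volume :=
    hχint.aestronglyMeasurable.smul hgcont.aestronglyMeasurable
  have hfint : Integrable f := by
    refine (hχint.norm.mul_const ‖(ψ : H)‖).mono' hfmeas ?_
    refine Filter.Eventually.of_forall fun s => le_of_eq ?_
    simp only [hf, norm_smul, hgnorm s]
  -- `‖η‖ ≤ ‖Y η‖`
  have hle : ∀ η : Y.domain, ‖(η : H)‖ ≤ ‖Y η‖ := by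
    intro η
    rcases eq_or_lt_of_le (norm_nonneg ((η : H))) with h0 | h0
    · rw [← h0]; exact norm_nonneg _
    · have h1 : ‖(η : H)‖ ^ 2 ≤ ‖(η : H)‖ * ‖Y η‖ := by
        calc ‖(η : H)‖ ^ 2 ≤ (inner (𝕜 := ℂ) (η : H) (Y η)).re := hY1 η
          _ ≤ ‖(inner (𝕜 := ℂ) (η : H) (Y η))‖ := Complex.re_le_norm _
          _ ≤ ‖(η : H)‖ * ‖Y η‖ := norm_inner_le_norm _ _
      rw [sq] at h1
      exact le_of_mul_le_mul_left h1 h0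
  -- the partition
  set p : ℕ → ℕ → ℝ := fun n i => -R + 2 * R / n * i with hp
  have hpmono : ∀ n, Monotone (p n) := by
    intro n i j hij
    have : (i : ℝ) ≤ j := by exact_mod_cast hij
    simp only [hp]
    have h2Rn : 0 ≤ 2 * R / n := by positivity
    nlinarith
  have hpIcc : ∀ n i, i ≤ n → p n i ∈ Set.Icc (-R) R := by
    intro n i hin
    constructor
    · simp only [hp]
      have : (0:ℝ) ≤ 2 * R / n * i := by positivity
      linarith
    · rcases Nat.eq_zero_or_pos n with hn | hn
      · subst hn
        interval_cases i
        simp [hp]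
        linarith
      · have hn' : (0:ℝ) < n := by exact_mod_cast hn
        have hiℝ : (i : ℝ) ≤ n := by exact_mod_cast hin
        simp only [hp]
        have : 2 * R / n * i ≤ 2 * R / n * n := by
          have h2Rn : 0 ≤ 2 * R / n := by positivity
          nlinarith
        have heq : 2 * R / (n:ℝ) * n = 2 * R := by
          field_simp
        linarith [this, heq ▸ this]
  have hp0 : ∀ n, p n 0 = -R := by intro n; simp [hp]
  have hpn : ∀ n, 1 ≤ n → p n n = R := by
    intro n hn
    have hn' : (n : ℝ) ≠ 0 := by positivity
    simp only [hp]
    field_simp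
    ring
  set S : ℕ → ℕ → Set ℝ := fun n i => Set.Ico (p n i) (p n (i+1)) with hS
  have hSsub : ∀ n i, 1 ≤ n → i < n → S n i ⊆ Set.Icc (-R) R := by
    intro n i hn hin x hx
    constructor
    · calc -R = p n 0 := (hp0 n).symm
        _ ≤ p n i := hpmono n (Nat.zero_le i)
        _ ≤ x := hx.1
    · calc x ≤ p n (i+1) := le_of_lt hx.2
        _ ≤ p n n := hpmono n hin
        _ = R := hpn n hn
  have hdisj : ∀ n, Set.Pairwise ↑(Finset.range n) (Function.onFun Disjoint fun i => S n i) := by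
    intro n i _ j _ hij
    have key : ∀ a b : ℕ, a < b → Disjoint (S n a) (S n b) := by
      intro a b hab
      refine Set.disjoint_left.2 fun x hxa hxb => ?_
      have h1 : x < p n (a+1) := hxa.2
      have h2 : p n (a+1) ≤ p n b := hpmono n hab
      exact absurd hxb.1 (by linarith)
    rcases lt_or_gt_of_ne hij with h | h
    · exact key i j h
    · exact (key j i h).symm
  set c : ℕ → ℕ → ℂ := fun n i => ∫ s in S n i, χhat s with hc
  set Φ : ℕ → Y.domain := fun n => ∑ i ∈ Finset.range n,
    c n i • (⟨U (p n i) (ψ : H), hinv (p n i) ψ⟩ : Y.domain) with hΦ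
  have hsum2 : ∀ n, ∑ i ∈ Finset.range n, (∫ s in S n i, ‖χhat s‖) ≤ I := by
    intro n
    rw [← integral_biUnion_finset (Finset.range n) (fun i _ => measurableSet_Ico)
      (hdisj n) (fun i _ => hχint.norm.integrableOn)]
    exact setIntegral_le_integral hχint.norm
      (Filter.Eventually.of_forall fun s => norm_nonneg _)
  have hYΦ : ∀ n, Y (Φ n) = ∑ i ∈ Finset.range n,
      c n i • Y (⟨U (p n i) (ψ : H), hinv (p n i) ψ⟩ : Y.domain) := by
    intro n
    show Y.toFun (Φ n) = _
    rw [hΦ]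
    simp only [map_sum, _root_.map_smul]
    rfl
  have h1 : ∀ n, ‖Y (Φ n)‖ ≤ C := by
    intro n
    rw [hYΦ n]
    calc ‖∑ i ∈ Finset.range n, c n i • Y (⟨U (p n i) (ψ : H), hinv (p n i) ψ⟩ : Y.domain)‖
        ≤ ∑ i ∈ Finset.range n, ‖c n i • Y (⟨U (p n i) (ψ : H), hinv (p n i) ψ⟩ : Y.domain)‖ :=
          norm_sum_le _ _
      _ ≤ ∑ i ∈ Finset.range n, (∫ s in S n i, ‖χhat s‖) * (Real.exp (k * R) * ‖Y ψ‖) := by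
          refine Finset.sum_le_sum fun i hi => ?_
          rw [norm_smul]
          have hci : ‖c n i‖ ≤ ∫ s in S n i, ‖χhat s‖ := norm_integral_le_integral_norm _
          have hb2 : ‖Y (⟨U (p n i) (ψ : H), hinv (p n i) ψ⟩ : Y.domain)‖ ≤
              Real.exp (k * R) * ‖Y ψ‖ := by
            refine le_trans (hbound (p n i) ψ) ?_
            have hpi : |p n i| ≤ R := by
              have := hpIcc n i (le_of_lt (Finset.mem_range.1 hi))
              exact abs_le.2 ⟨this.1, this.2⟩
            have hexp : Real.exp (k * |p n i|) ≤ Real.exp (k * R) :=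
              Real.exp_le_exp.2 (mul_le_mul_of_nonneg_left hpi hk)
            exact mul_le_mul_of_nonneg_right hexp (norm_nonneg _)
          exact mul_le_mul hci hb2 (norm_nonneg _)
            (integral_nonneg fun s => norm_nonneg _)
      _ = (∑ i ∈ Finset.range n, (∫ s in S n i, ‖χhat s‖)) * (Real.exp (k * R) * ‖Y ψ‖) := by
          rw [Finset.sum_mul]
      _ ≤ I * (Real.exp (k * R) * ‖Y ψ‖) := by
          refine mul_le_mul_of_nonneg_right (hsum2 n) (by positivity)
      _ = C := by rw [hC]; ring
  -- decomposition of φ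
  have hφsplit : ∀ n, 1 ≤ n → φ = ∑ i ∈ Finset.range n, ∫ s in S n i, f s := by
    intro n hn
    have e1 : φ = ∫ s in Set.Icc (-R) R, f s := by
      refine (setIntegral_eq_integral_of_forall_compl_eq_zero fun s hs => ?_).symm
      have : χhat s = 0 := by
        by_contra hne
        exact hs (hsupp s hne)
      simp [hf, this]
    have e2 : (∫ s in Set.Icc (-R) R, f s) = ∫ s in Set.Ico (-R) R, f s :=
      integral_Icc_eq_integral_Ico
    have e3 : Set.Ico (-R) R = ⋃ i ∈ Finset.range n, S n i := by
      rw [iUnion_Ico_partition (p n) (hpmono n) n, hp0 n, hpn n hn]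
    rw [e1, e2, e3]
    exact integral_biUnion_finset (Finset.range n) (fun i _ => measurableSet_Ico)
      (hdisj n) (fun i _ => hfint.integrableOn)
  have hΦcoe : ∀ n, ((Φ n : H)) = ∑ i ∈ Finset.range n, c n i • g (p n i) := by
    intro n
    simp [hΦ, hg]
  -- convergence of Φ to φ
  have h2 : Tendsto (fun n => ((Φ n : H))) atTop (nhds φ) := by
    rw [Metric.tendsto_atTop]
    intro ε' hε'
    set ε : ℝ := ε' / (2 * (I + 1)) with hε
    have hεpos : 0 < ε := by positivity
    obtain ⟨δ, hδpos, hδ⟩ := (Metric.uniformContinuousOn_iff.1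
      ((isCompact_Icc (a := -R) (b := R)).uniformContinuousOn_of_continuous
        hgcont.continuousOn)) ε hεpos
    obtain ⟨N₁, hN₁⟩ := exists_nat_gt (2 * R / δ)
    refine ⟨max N₁ 1, fun n hn => ?_⟩
    have hn1 : 1 ≤ n := le_trans (le_max_right _ _) hn
    have hnN : (2 * R / δ) < n := lt_of_lt_of_le hN₁ (by exact_mod_cast le_trans (le_max_left _ _) hn)
    have hn0 : (0:ℝ) < n := by exact_mod_cast hn1
    have hstep : 2 * R / n < δ := by
      rw [div_lt_iff₀ hn0]
      rw [div_lt_iff₀ hδpos] at hnN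
      linarith [hnN]
    -- key estimate
    have hkey : ‖(Φ n : H) - φ‖ ≤ I * ε := by
      rw [hΦcoe n, hφsplit n hn1, ← Finset.sum_sub_distrib]
      have hterm : ∀ i ∈ Finset.range n,
          c n i • g (p n i) - (∫ s in S n i, f s) =
            ∫ s in S n i, χhat s • (g (p n i) - g s) := by
        intro i hi
        have e4 : c n i • g (p n i) = ∫ s in S n i, χhat s • g (p n i) := by
          exact (integral_smul_const _ _).symm
        rw [e4, ← integral_sub ((hχint.smul_const _).integrableOn) hfint.integrableOn]
        refine integral_congr_ae (Filter.Eventually.of_forall fun s => ?_)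
        simp [hf, smul_sub]
      calc ‖∑ i ∈ Finset.range n, (c n i • g (p n i) - ∫ s in S n i, f s)‖
          ≤ ∑ i ∈ Finset.range n, ‖c n i • g (p n i) - ∫ s in S n i, f s‖ := norm_sum_le _ _
        _ ≤ ∑ i ∈ Finset.range n, (∫ s in S n i, ‖χhat s‖) * ε := by
            refine Finset.sum_le_sum fun i hi => ?_
            rw [hterm i hi]
            have hin : i < n := Finset.mem_range.1 hi
            have hFi : Integrable (fun s => χhat s • (g (p n i) - g s)) := by
              refine (hχint.norm.mul_const (‖(ψ:H)‖ + ‖(ψ:H)‖)).mono'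
                (hχint.aestronglyMeasurable.smul
                  ((continuous_const.sub hgcont).aestronglyMeasurable)) ?_
              refine Filter.Eventually.of_forall fun s => ?_
              rw [norm_smul]
              have : ‖g (p n i) - g s‖ ≤ ‖(ψ:H)‖ + ‖(ψ:H)‖ := by
                calc ‖g (p n i) - g s‖ ≤ ‖g (p n i)‖ + ‖g s‖ := norm_sub_le _ _
                  _ = ‖(ψ:H)‖ + ‖(ψ:H)‖ := by rw [hgnorm, hgnorm]
              exact mul_le_mul_of_nonneg_left this (norm_nonneg _)
            calc ‖∫ s in S n i, χhat s • (g (p n i) - g s)‖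
                ≤ ∫ s in S n i, ‖χhat s • (g (p n i) - g s)‖ :=
                  norm_integral_le_integral_norm _
              _ ≤ ∫ s in S n i, ‖χhat s‖ * ε := by
                  refine setIntegral_mono_on hFi.norm.integrableOn
                    ((hχint.norm.mul_const ε).integrableOn) measurableSet_Ico ?_
                  intro s hs
                  rw [norm_smul]
                  refine mul_le_mul_of_nonneg_left ?_ (norm_nonneg _)
                  have hsI : s ∈ Set.Icc (-R) R := hSsub n i hn1 hin hs
                  have hpI : p n i ∈ Set.Icc (-R) R := hpIcc n i (le_of_lt hin)
                  have hdist : dist (p n i) s < δ := by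
                    rw [Real.dist_eq, abs_sub_comm, abs_of_nonneg (by linarith [hs.1])]
                    have : s < p n (i+1) := hs.2
                    have hd : p n (i+1) - p n i = 2 * R / n := by
                      simp only [hp]
                      push_cast
                      ring
                    have h5 : s - p n i < p n (i+1) - p n i := by linarith
                    rw [hd] at h5
                    exact h5.trans hstep
                  have := hδ (p n i) hpI s hsI hdist
                  rw [dist_eq_norm] at this
                  exact le_of_lt this
              _ = (∫ s in S n i, ‖χhat s‖) * ε := integral_mul_const _ _
        _ = (∑ i ∈ Finset.range n, (∫ s in S n i, ‖χhat s‖)) * ε := by rw [Finset.sum_mul]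
        _ ≤ I * ε := mul_le_mul_of_nonneg_right (hsum2 n) (le_of_lt hεpos)
    rw [dist_eq_norm]
    calc ‖(Φ n : H) - φ‖ ≤ I * ε := hkey
      _ ≤ (I + 1) * ε := by nlinarith
      _ = ε' / 2 := by rw [hε]; field_simp
      _ < ε' := by linarith
  -- weak limit machinery
  set W := WithLp 2 (H × H) with hW
  set e : W ≃L[ℂ] H × H := WithLp.prodContinuousLinearEquiv 2 ℂ H H with he
  set G : Submodule ℂ W := Y.graph.comap (e.toLinearEquiv : W →ₗ[ℂ] H × H) with hG
  have hGclosed : IsClosed (G : Set W) := by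
    have : (G : Set W) = e ⁻¹' (Y.graph : Set (H × H)) := rfl
    rw [this]
    exact hYclosed.preimage e.continuous
  set v : ℕ → W := fun n => (WithLp.equiv 2 (H × H)).symm ((Φ n : H), Y (Φ n)) with hv
  have hvG : ∀ n, v n ∈ G := by
    intro n
    have : e (v n) = ((Φ n : H), Y (Φ n)) := rfl
    rw [hG, Submodule.mem_comap]
    show e (v n) ∈ Y.graph
    rw [this]
    exact Y.mem_graph (Φ n)
  have hvb : ∀ n, ‖v n‖ ≤ 2 * C := by
    intro n
    have hfst : ‖((Φ n : H))‖ ≤ C := le_trans (hle (Φ n)) (h1 n)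
    have hnorm : ‖v n‖ = Real.sqrt (‖((Φ n : H))‖ ^ 2 + ‖Y (Φ n)‖ ^ 2) := by
      rw [hv, WithLp.prod_norm_eq_of_L2]
      simp
    rw [hnorm]
    calc Real.sqrt (‖((Φ n : H))‖ ^ 2 + ‖Y (Φ n)‖ ^ 2)
        ≤ Real.sqrt ((2 * C) ^ 2) := by
          refine Real.sqrt_le_sqrt ?_
          nlinarith [h1 n, norm_nonneg (Y (Φ n)), norm_nonneg ((Φ n : H))]
      _ = 2 * C := Real.sqrt_sq (by linarith)
  set 𝒰 : Ultrafilter ℕ := Ultrafilter.of atTop with h𝒰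
  have h𝒰le : (𝒰 : Filter ℕ) ≤ atTop := Ultrafilter.of_le atTop
  obtain ⟨w, hwnorm, hwtend⟩ := exists_weak_limit 𝒰 v (2 * C) hvb
  -- w is in G
  haveI : CompleteSpace G := hGclosed.completeSpace_coe
  have hwG : w ∈ G := by
    rw [← Submodule.orthogonal_orthogonal G]
    rw [Submodule.mem_orthogonal]
    intro u hu
    have h0 : ∀ n, (inner ℂ (v n) u : ℂ) = 0 := fun n =>
      (Submodule.mem_orthogonal G u).1 hu (v n) (hvG n)
    have : Tendsto (fun n => (inner ℂ (v n) u : ℂ)) 𝒰 (nhds 0) := by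
      simp only [h0]; exact tendsto_const_nhds
    have hwu : (inner ℂ w u : ℂ) = 0 := tendsto_nhds_unique (hwtend u) this
    rw [← inner_conj_symm, hwu, map_zero]
  set wp : H × H := e w with hwp
  -- first component is φ
  have hfst : wp.1 = φ := by
    refine ext_inner_right ℂ fun a => ?_
    have hy := hwtend ((WithLp.equiv 2 (H × H)).symm (a, 0))
    have hinner : ∀ n, (inner ℂ (v n) ((WithLp.equiv 2 (H × H)).symm (a, 0)) : ℂ)
        = inner ℂ ((Φ n : H)) a := by
      intro n
      rw [hv, WithLp.prod_inner_apply]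
      simp
    have hwinner : (inner ℂ w ((WithLp.equiv 2 (H × H)).symm (a, 0)) : ℂ) = inner ℂ wp.1 a := by
      rw [WithLp.prod_inner_apply]
      have e1 : ((WithLp.equiv 2 (H × H)).symm (a, (0:H))).ofLp.1 = a := rfl
      have e2 : ((WithLp.equiv 2 (H × H)).symm (a, (0:H))).ofLp.2 = (0:H) := rfl
      rw [e1, e2, inner_zero_right, add_zero]
      rfl
    rw [hwinner] at hy
    simp only [hinner] at hy
    have h2' : Tendsto (fun n => (inner ℂ ((Φ n : H)) a : ℂ)) 𝒰 (nhds (inner ℂ φ a)) :=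
      (Tendsto.inner h2 tendsto_const_nhds).mono_left h𝒰le
    exact tendsto_nhds_unique hy h2'
  -- second component bound
  have hsnd : ‖wp.2‖ ≤ C := by
    have hy := hwtend ((WithLp.equiv 2 (H × H)).symm (0, wp.2))
    have hinner : ∀ n, (inner ℂ (v n) ((WithLp.equiv 2 (H × H)).symm (0, wp.2)) : ℂ)
        = inner ℂ (Y (Φ n)) wp.2 := by
      intro n
      rw [hv, WithLp.prod_inner_apply]
      simp
    have hwinner : (inner ℂ w ((WithLp.equiv 2 (H × H)).symm (0, wp.2)) : ℂ)
        = inner ℂ wp.2 wp.2 := by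
      rw [WithLp.prod_inner_apply]
      have e1 : ((WithLp.equiv 2 (H × H)).symm ((0:H), wp.2)).ofLp.1 = (0:H) := rfl
      have e2 : ((WithLp.equiv 2 (H × H)).symm ((0:H), wp.2)).ofLp.2 = wp.2 := rfl
      rw [e1, e2, inner_zero_right, zero_add]
      rfl
    rw [hwinner] at hy
    simp only [hinner] at hy
    have hnormle : ‖(inner ℂ wp.2 wp.2 : ℂ)‖ ≤ C * ‖wp.2‖ := by
      refine le_of_tendsto hy.norm (Filter.Eventually.of_forall fun n => ?_)
      calc ‖(inner ℂ (Y (Φ n)) wp.2 : ℂ)‖ ≤ ‖Y (Φ n)‖ * ‖wp.2‖ := norm_inner_le_norm _ _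
        _ ≤ C * ‖wp.2‖ := mul_le_mul_of_nonneg_right (h1 n) (norm_nonneg _)
    have hself : ‖(inner ℂ wp.2 wp.2 : ℂ)‖ = ‖wp.2‖ * ‖wp.2‖ := by
      rw [inner_self_eq_norm_sq_to_K, norm_pow, RCLike.norm_ofReal,
        abs_of_nonneg (norm_nonneg _), sq]
    rw [hself] at hnormle
    rcases eq_or_lt_of_le (norm_nonneg wp.2) with h0 | h0
    · rw [← h0]; exact hC0
    · exact le_of_mul_le_mul_right hnormle h0
  -- conclude
  have hgraph : wp ∈ Y.graph := hwG
  rw [LinearPMap.mem_graph_iff] at hgraph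
  obtain ⟨η, hη1, hη2⟩ := hgraph
  have hmem : φ ∈ Y.domain := by
    rw [← hfst, ← hη1]
    exact η.2
  refine ⟨hmem, ?_⟩
  have hsub : (⟨φ, hmem⟩ : Y.domain) = η := by
    apply Subtype.ext
    simp [hη1, hfst]
  rw [hsub, hη2]
  exact hsnd
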